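/- Let C_{X(1,2)} = Σ_j |j⟩⟨j|⊗X^j and C_{X(2,1)} = Σ_j X^j⊗|j⟩⟨j| on ℂ⁴⊗ℂ⁴, and H the d=4 Fourier transform. Then C_{X(1,2)} C_{X(2,1)}† C_{X(1,2)} (√i H applied twice on the second factor, i.e. 1⊗(√i H)²) = i·SWAP, where SWAP|j⟩|k⟩ = |k⟩|j⟩. -/

import Mathlib

open Matrix Complex Kronecker

noncomputable section

/-- Clock operator Z on ℂ⁴ : Z|j⟩ = i^j |j⟩. -/
def Zc : Matrix (Fin 4) (Fin 4) ℂ := Matrix.diagonal fun j => Complex.I ^ (j : ℕ)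

/-- Shift operator X on ℂ⁴ : X|j⟩ = |j+1 mod 4⟩. -/
def Xs : Matrix (Fin 4) (Fin 4) ℂ := Matrix.of fun j k => if j = k + 1 then 1 else 0

/-- The d = 4 Fourier transform H = ½ Σ_{jk} i^{jk}|j⟩⟨k|. -/
def Hgate : Matrix (Fin 4) (Fin 4) ℂ :=
  Matrix.of fun j k => (1 / 2 : ℂ) * Complex.I ^ ((j : ℕ) * (k : ℕ))

/-- Controlled-X gate C_X = Σ_j |j⟩⟨j| ⊗ X^j on two qudits. -/
def CX : Matrix (Fin 4 × Fin 4) (Fin 4 × Fin 4) ℂ :=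
  ∑ j : Fin 4, Matrix.single j j 1 ⊗ₖ (Xs ^ (j : ℕ))

/-- Controlled-Z gate C_Z = Σ_{j,k} i^{jk} |j⟩⟨j| ⊗ |k⟩⟨k| on two qudits. -/
def CZ : Matrix (Fin 4 × Fin 4) (Fin 4 × Fin 4) ℂ :=
  ∑ j : Fin 4, ∑ k : Fin 4, Complex.I ^ ((j : ℕ) * (k : ℕ)) •
    (Matrix.single j j 1 ⊗ₖ Matrix.single k k 1)

/-- Controlled-X with control on the second qudit: Σ_j X^j ⊗ |j⟩⟨j|. -/
def CX21 : Matrix (Fin 4 × Fin 4) (Fin 4 × Fin 4) ℂ :=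
  ∑ j : Fin 4, (Xs ^ (j : ℕ)) ⊗ₖ Matrix.single j j 1

/-- The SWAP gate on two qudits. -/
def SWAP : Matrix (Fin 4 × Fin 4) (Fin 4 × Fin 4) ℂ :=
  Matrix.of fun p q => if p.1 = q.2 ∧ p.2 = q.1 then 1 else 0

open Fin.NatCast Fin.CommRing

lemma Xs_pow_apply (n : ℕ) (j k : Fin 4) : (Xs ^ n) j k = if j = k + (n : Fin 4) then 1 else 0 := by
  induction n generalizing k with
  | zero => simp [Matrix.one_apply, eq_comm]
  | succ n ih =>
    rw [pow_succ, Matrix.mul_apply]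
    simp only [ih]
    simp only [Xs, Matrix.of_apply, ite_mul, one_mul, zero_mul, mul_ite, mul_one, mul_zero]
    rw [Finset.sum_ite_eq' Finset.univ (k+1) (fun m => if j = m + (n:Fin 4) then 1 else 0)]
    simp only [Finset.mem_univ, if_true]
    congr 1
    push_cast
    rw [add_assoc, add_comm 1]

lemma CX_apply (a b c d : Fin 4) :
    CX (a,b) (c,d) = if a = c ∧ b = d + a then 1 else 0 := by
  simp only [CX, Matrix.sum_apply, Matrix.kroneckerMap_apply, Xs_pow_apply,
    Matrix.single, Matrix.of_apply, Fin.cast_val_eq_self]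
  rw [Finset.sum_eq_single a]
  · by_cases h : a = c
    · subst h; simp
    · simp [h]
  · intro j _ hj
    aesop
  · simp

lemma CX21_apply (a b c d : Fin 4) :
    CX21 (a,b) (c,d) = if b = d ∧ a = c + b then 1 else 0 := by
  simp only [CX21, Matrix.sum_apply, Matrix.kroneckerMap_apply, Xs_pow_apply,
    Matrix.single, Matrix.of_apply, Fin.cast_val_eq_self]
  rw [Finset.sum_eq_single b]
  · by_cases h : b = d
    · subst h; simp [and_comm]
    · simp [h]
  · intro j _ hj
    aesop
  · simp

lemma CX21H_apply (a b c d : Fin 4) :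
    CX21ᴴ (a,b) (c,d) = if d = b ∧ c = a + d then 1 else 0 := by
  rw [Matrix.conjTranspose_apply, CX21_apply]
  split_ifs with h1 h2 h2 <;> simp_all <;> tauto

lemma CX_row (a b : Fin 4) (p : Fin 4 × Fin 4) :
    CX (a,b) p = if p = (a, b - a) then 1 else 0 := by
  obtain ⟨c, d⟩ := p
  rw [CX_apply]
  simp only [Prod.mk.injEq]
  refine if_congr ?_ rfl rfl
  constructor
  · rintro ⟨h1, h2⟩; exact ⟨h1.symm, by rw [h2]; ring⟩
  · rintro ⟨h1, h2⟩; exact ⟨h1.symm, by rw [h2]; ring⟩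

lemma CX21H_row (a b : Fin 4) (p : Fin 4 × Fin 4) :
    CX21ᴴ (a,b) p = if p = (a + b, b) then 1 else 0 := by
  obtain ⟨c, d⟩ := p
  rw [CX21H_apply]
  simp only [Prod.mk.injEq]
  refine if_congr ?_ rfl rfl
  constructor
  · rintro ⟨h1, h2⟩; exact ⟨by rw [h2, h1], h1⟩
  · rintro ⟨h1, h2⟩; exact ⟨h2, by rw [h1, h2]⟩

lemma row_collapse (x : Fin 4 × Fin 4) (g : Fin 4 × Fin 4 → ℂ) :
    (∑ p : Fin 4 × Fin 4, (if p = x then (1:ℂ) else 0) * g p) = g x := by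
  simp only [ite_mul, one_mul, zero_mul]
  rw [Finset.sum_ite_eq' Finset.univ x g]
  simp

lemma M_row (a b : Fin 4) (q : Fin 4 × Fin 4) :
    (CX * CX21ᴴ * CX) (a,b) q = if q = (b, -a) then 1 else 0 := by
  rw [Matrix.mul_apply]
  have h1 : ∀ p, (CX * CX21ᴴ) (a,b) p = if p = (b, b - a) then 1 else 0 := by
    intro p
    rw [Matrix.mul_apply]
    simp only [CX_row a b]
    rw [row_collapse (a, b - a) (fun x => CX21ᴴ x p)]
    rw [CX21H_row]
    congr 2
    ring
  simp only [h1]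
  rw [row_collapse (b, b - a) (fun p' => CX p' q)]
  rw [CX_row]
  congr 2
  ring

lemma exp_sq : Complex.exp (Real.pi * Complex.I / 4) ^ 2 = Complex.exp (Real.pi * Complex.I / 2) := by
  rw [← Complex.exp_nat_mul]
  ring_nf

lemma exp_half : Complex.exp (Real.pi * Complex.I / 2) = Complex.I := by
  have : (Real.pi : ℂ) * Complex.I / 2 = (Real.pi / 2 : ℝ) * Complex.I := by push_cast; ring
  rw [this, Complex.exp_mul_I]
  simp [Complex.cos_ofReal_re, ← Complex.ofReal_cos, ← Complex.ofReal_sin,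
    Real.cos_pi_div_two, Real.sin_pi_div_two]

lemma Hsq_apply (f d : Fin 4) :
    (Hgate * Hgate) f d = if f + d = 0 then 1 else 0 := by
  rw [Matrix.mul_apply, Fin.sum_univ_four]
  have h2 : ((2 : Fin 4) : ℕ) = 2 := rfl
  have h3 : ((3 : Fin 4) : ℕ) = 3 := rfl
  fin_cases f <;> fin_cases d <;>
    (first | rw [if_pos (by decide)] | rw [if_neg (by decide)]) <;>
    norm_num [Hgate, h2, h3, pow_succ, Complex.I_sq] <;>
    ring_nf <;> norm_num [Complex.I_sq]

theorem swap_from_controlled_X :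
    CX * CX21ᴴ * CX * (1 ⊗ₖ (Complex.exp (Real.pi * Complex.I / 4) • Hgate) ^ 2)
      = Complex.I • SWAP := by
  have hK : (1 ⊗ₖ (Complex.exp (Real.pi * Complex.I / 4) • Hgate)) ^ 2
      = Complex.I • ((1 : Matrix (Fin 4) (Fin 4) ℂ) ⊗ₖ (Hgate * Hgate)) := by
    rw [sq, ← Matrix.mul_kronecker_mul, one_mul, smul_mul_smul_comm, ← sq, exp_sq, exp_half,
      Matrix.kronecker_smul]
  rw [hK, Matrix.mul_smul]
  congr 1
  ext ⟨a, b⟩ ⟨c, d⟩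
  rw [Matrix.mul_apply]
  simp only [M_row]
  rw [row_collapse (b, -a)
    (fun p => ((1 : Matrix (Fin 4) (Fin 4) ℂ) ⊗ₖ (Hgate * Hgate)) p (c, d))]
  simp only [Matrix.kroneckerMap_apply, Matrix.smul_apply, Hsq_apply, Matrix.one_apply,
    SWAP, Matrix.of_apply, smul_eq_mul]
  split_ifs <;> simp_all [neg_add_eq_zero] <;> tauto
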